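/- Convexity of the length functional along holomorphic families of circles: let 0 < r₁ < r₂ and let g : ℂ → ℂ be holomorphic on the open annulus A = {z ∈ ℂ : r₁ < |z| < r₂}. Then the function λ : (log r₁, log r₂) → ℝ defined by λ(t) = ∫₀^{2π} |g′(e^{t}e^{iθ})| e^{t} dθ (the length of the image under g of the circle of radius e^t) is a convex function of t. -/

import Mathlib

open Real

namespace LengthConvexAux

open Complex MeasureTheory Set Metric intervalIntegral

/-- The length-type functional: integral of `|Φ|` over a horizontal segment at height params. -/
noncomputable def mfun (Φ : ℂ → ℂ) (t : ℝ) : ℝ :=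
  ∫ θ in (0:ℝ)..(2*π), ‖Φ ((t:ℂ) + (θ:ℂ) * Complex.I)‖

/-- Open vertical strip. -/
def S (l₁ l₂ : ℝ) : Set ℂ := {w : ℂ | l₁ < w.re ∧ w.re < l₂}

lemma isOpen_S (l₁ l₂ : ℝ) : IsOpen (S l₁ l₂) := by
  have h : S l₁ l₂ = Complex.re ⁻¹' Set.Ioo l₁ l₂ := rfl
  rw [h]
  exact isOpen_Ioo.preimage Complex.continuous_re

lemma mem_S_of_line {l₁ l₂ : ℝ} {w : ℂ} (hw : w ∈ S l₁ l₂) (θ : ℝ) :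
    w + (θ:ℂ) * Complex.I ∈ S l₁ l₂ := by
  have : (w + (θ:ℂ) * Complex.I).re = w.re := by simp
  exact ⟨by rw [this]; exact hw.1, by rw [this]; exact hw.2⟩

lemma cont_slice {l₁ l₂ : ℝ} {f : ℂ → ℂ} (hf : ContinuousOn f (S l₁ l₂)) {w : ℂ}
    (hw : w ∈ S l₁ l₂) : Continuous (fun θ : ℝ => f (w + (θ:ℂ) * Complex.I)) := by
  have hcont : Continuous (fun θ : ℝ => w + (θ:ℂ) * Complex.I) :=
    continuous_const.add (Complex.continuous_ofReal.mul continuous_const)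
  exact hf.comp_continuous hcont (fun θ => mem_S_of_line hw θ)

lemma mfun_nonneg (Φ : ℂ → ℂ) (t : ℝ) : 0 ≤ mfun Φ t :=
  intervalIntegral.integral_nonneg Real.two_pi_pos.le
    (fun _ _ => norm_nonneg _)

lemma key {Φ : ℂ → ℂ} {l₁ l₂ : ℝ}
    (hΦ : DifferentiableOn ℂ Φ (S l₁ l₂))
    (hper : ∀ w, Φ (w + 2 * (π:ℂ) * Complex.I) = Φ w)
    {x y a b : ℝ} (hx : x ∈ Set.Ioo l₁ l₂) (hy : y ∈ Set.Ioo l₁ l₂)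
    (hxy : x < y) (ha : 0 < a) (hb : 0 < b) (hab : a + b = 1) :
    mfun Φ (a*x + b*y) ≤ a * mfun Φ x + b * mfun Φ y := by
  have hΦcont : ContinuousOn Φ (S l₁ l₂) := hΦ.continuousOn
  have hΦ' : ContinuousOn (deriv Φ) (S l₁ l₂) :=
    (((hΦ.analyticOnNhd (isOpen_S l₁ l₂)).deriv)).continuousOn
  set t₀ : ℝ := a*x + b*y with ht₀def
  have ht₀x : x < t₀ := by
    have h1 : t₀ - x = b * (y - x) := by rw [ht₀def]; linear_combination x * hab
    nlinarith [mul_pos hb (sub_pos.mpr hxy)]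
  have ht₀y : t₀ < y := by
    have h1 : y - t₀ = a * (y - x) := by rw [ht₀def]; linear_combination (-y) * hab
    nlinarith [mul_pos ha (sub_pos.mpr hxy)]
  have ht₀S : ((t₀:ℝ):ℂ) ∈ S l₁ l₂ := ⟨by simpa using lt_trans hx.1 ht₀x,
    by simpa using lt_trans ht₀y hy.2⟩
  -- the unimodular weight
  set c : ℝ → ℂ := fun θ => Φ ((t₀:ℂ) + (θ:ℂ) * Complex.I) with hcdef
  have hccont : Continuous c := cont_slice hΦcont ht₀S
  set u : ℝ → ℂ := fun θ => if c θ = 0 then 1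
    else (starRingEnd ℂ) (c θ) / ((‖c θ‖ : ℝ) : ℂ) with hudef
  have hu1 : ∀ θ, ‖u θ‖ = 1 := by
    intro θ
    by_cases h : c θ = 0
    · simp [hudef, h]
    · have hne : ‖c θ‖ ≠ 0 := by simpa using h
      simp only [hudef, if_neg h]
      rw [norm_div, RCLike.norm_conj, Complex.norm_real, Real.norm_eq_abs,
        _root_.abs_of_nonneg (norm_nonneg _), div_self hne]
  have huc : ∀ θ, u θ * c θ = ((‖c θ‖ : ℝ) : ℂ) := by
    intro θ
    by_cases h : c θ = 0
    · simp [hudef, h]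
    · have hne : ((‖c θ‖ : ℝ) : ℂ) ≠ 0 := by
        simpa [Complex.ofReal_eq_zero] using h
      simp only [hudef, if_neg h]
      rw [div_mul_eq_mul_div, mul_comm ((starRingEnd ℂ) (c θ)) (c θ), Complex.mul_conj,
        Complex.normSq_eq_norm_sq]
      push_cast
      rw [sq, mul_div_assoc, div_self hne, mul_one]
  have humeas : Measurable u := by
    have hset : MeasurableSet {θ : ℝ | c θ = 0} :=
      hccont.measurable (MeasurableSet.singleton 0)
    exact Measurable.ite hset measurable_const
      (((continuous_star.comp hccont).measurable).div
        ((Complex.continuous_ofReal.comp (continuous_norm.comp hccont)).measurable))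
  -- the auxiliary holomorphic function
  set G : ℂ → ℂ := fun w => ∫ θ in (0:ℝ)..(2*π), u θ * Φ (w + (θ:ℂ) * Complex.I) with hGdef
  have hG_eq : ∀ w : ℂ, G w = ∫ θ in Set.Ioc (0:ℝ) (2*π), u θ * Φ (w + (θ:ℂ) * Complex.I) :=
    fun w => intervalIntegral.integral_of_le Real.two_pi_pos.le
  have hGdiff : DifferentiableOn ℂ G (S l₁ l₂) := by
    intro w₀ hw₀
    apply DifferentiableAt.differentiableWithinAt
    obtain ⟨ε, hε, hsub⟩ := nhds_basis_closedBall.mem_iff.mp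
      ((isOpen_S l₁ l₂).mem_nhds hw₀)
    set K : Set ℂ := (fun p : ℂ × ℝ => p.1 + (p.2:ℂ) * Complex.I) ''
      (closedBall w₀ ε ×ˢ Set.Icc 0 (2*π)) with hKdef
    have hKcompact : IsCompact K :=
      ((isCompact_closedBall _ _).prod isCompact_Icc).image
        (continuous_fst.add ((Complex.continuous_ofReal.comp continuous_snd).mul
          continuous_const))
    have hKS : K ⊆ S l₁ l₂ := by
      rintro _ ⟨⟨w, θ⟩, ⟨hw, _⟩, rfl⟩
      exact mem_S_of_line (hsub hw) θ
    obtain ⟨C, hC⟩ := hKcompact.exists_bound_of_continuousOn (hΦ'.mono hKS)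
    have hmain := _root_.hasDerivAt_integral_of_dominated_loc_of_deriv_le
      (μ := volume.restrict (Set.Ioc (0:ℝ) (2*π)))
      (F := fun (w : ℂ) (θ : ℝ) => u θ * Φ (w + (θ:ℂ) * Complex.I))
      (F' := fun (w : ℂ) (θ : ℝ) => u θ * deriv Φ (w + (θ:ℂ) * Complex.I))
      (x₀ := w₀) (bound := fun _ => C) (Metric.ball_mem_nhds w₀ hε)
      ?_ ?_ ?_ ?_ ?_ ?_
    · have heq : (fun w : ℂ => ∫ θ in Set.Ioc (0:ℝ) (2*π),
          u θ * Φ (w + (θ:ℂ) * Complex.I)) = G := funext fun w => (hG_eq w).symm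
      have := hmain.2
      rw [heq] at this
      exact this.differentiableAt
    · filter_upwards [(isOpen_S l₁ l₂).mem_nhds hw₀] with w hw
      exact (humeas.mul (cont_slice hΦcont hw).measurable).aestronglyMeasurable
    · exact MeasureTheory.Integrable.bdd_mul
        ((cont_slice hΦcont hw₀).integrableOn_Ioc)
        humeas.aestronglyMeasurable (c := 1) (Filter.Eventually.of_forall fun θ => (hu1 θ).le)
    · exact (humeas.mul (cont_slice hΦ' hw₀).measurable).aestronglyMeasurable
    · filter_upwards [MeasureTheory.ae_restrict_mem measurableSet_Ioc] with θ hθ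
      intro w hw
      rw [norm_mul, hu1, one_mul]
      exact hC _ ⟨(w, θ), ⟨ball_subset_closedBall hw, Set.Ioc_subset_Icc_self hθ⟩, rfl⟩
    · exact MeasureTheory.integrable_const C
    · filter_upwards with θ
      intro w hw
      have hzS : w + (θ:ℂ) * Complex.I ∈ S l₁ l₂ :=
        mem_S_of_line (hsub (ball_subset_closedBall hw)) θ
      have hd : HasDerivAt Φ (deriv Φ (w + (θ:ℂ) * Complex.I)) (w + (θ:ℂ) * Complex.I) :=
        (hΦ.differentiableAt ((isOpen_S l₁ l₂).mem_nhds hzS)).hasDerivAt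
      have hinner : HasDerivAt (fun w : ℂ => w + (θ:ℂ) * Complex.I) 1 w :=
        (hasDerivAt_id w).add_const _
      simpa using (hd.comp w hinner).const_mul (u θ)
  -- boundedness along vertical lines
  have hGbound : ∀ z ∈ S l₁ l₂, ‖G z‖ ≤ mfun Φ z.re := by
    intro z hz
    set q : ℝ → ℝ := fun s => ‖Φ ((z.re:ℂ) + (s:ℂ) * Complex.I)‖ with hqdef
    have hq : Function.Periodic q (2*π) := by
      intro s
      simp only [hqdef]
      have harg : ((z.re:ℂ) + ((s + 2*π : ℝ):ℂ) * Complex.I)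
          = ((z.re:ℂ) + (s:ℂ) * Complex.I) + 2 * (π:ℂ) * Complex.I := by
        push_cast; ring
      rw [harg, hper]
    calc ‖G z‖ ≤ ∫ θ in (0:ℝ)..(2*π), ‖u θ * Φ (z + (θ:ℂ) * Complex.I)‖ :=
          intervalIntegral.norm_integral_le_integral_norm Real.two_pi_pos.le
      _ = ∫ θ in (0:ℝ)..(2*π), q (θ + z.im) := by
          apply intervalIntegral.integral_congr
          intro θ _
          show ‖u θ * Φ (z + (θ:ℂ) * Complex.I)‖ = q (θ + z.im)
          rw [norm_mul, hu1, one_mul]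
          simp only [hqdef]
          congr 2
          apply Complex.ext
          · simp
          · simp [add_comm]
      _ = ∫ s in (0 + z.im)..(2*π + z.im), q s := intervalIntegral.integral_comp_add_right q z.im
      _ = ∫ s in (0:ℝ)..(2*π), q s := by
          rw [zero_add, add_comm (2*π) z.im]
          have h4 := hq.intervalIntegral_add_eq z.im 0
          rw [zero_add] at h4
          exact h4
      _ = mfun Φ z.re := rfl
  -- global bound on the transported strip
  set aff : ℂ → ℂ := fun w => (x:ℂ) + w * ((y:ℂ) - (x:ℂ)) with haffdef
  have haffre : ∀ w : ℂ, (aff w).re = x + w.re * (y - x) := by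
    intro w
    simp only [haffdef, Complex.add_re, Complex.mul_re, Complex.sub_re, Complex.sub_im,
      Complex.ofReal_re, Complex.ofReal_im, sub_zero, mul_zero]
  have haffS : ∀ w : ℂ, w.re ∈ Set.Icc (0:ℝ) 1 → aff w ∈ S l₁ l₂ := by
    intro w hw
    constructor
    · rw [haffre]
      nlinarith [hx.1, hw.1, hw.2]
    · rw [haffre]
      nlinarith [hy.2, hw.1, hw.2]
  set H : ℂ → ℂ := fun w => G (aff w) with hHdef
  have haffdiff : Differentiable ℂ aff := by
    simp only [haffdef]
    exact (differentiable_id.mul_const _).const_add _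
  have hHd : DiffContOnCl ℂ H (Complex.HadamardThreeLines.verticalStrip 0 1) := by
    apply DifferentiableOn.diffContOnCl
    intro w hw
    have hw' : w ∈ Complex.HadamardThreeLines.verticalClosedStrip 0 1 := by
      have hcl : closure (Complex.HadamardThreeLines.verticalStrip 0 1) ⊆
          Complex.HadamardThreeLines.verticalClosedStrip 0 1 := by
        apply closure_minimal
        · exact fun z hz => ⟨hz.1.le, hz.2.le⟩
        · exact IsClosed.preimage Complex.continuous_re isClosed_Icc
      exact hcl hw
    have haffw : aff w ∈ S l₁ l₂ := haffS w hw'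
    exact ((hGdiff.differentiableAt ((isOpen_S l₁ l₂).mem_nhds haffw)).comp w
      (haffdiff w)).differentiableWithinAt
  -- uniform bound for BddAbove
  obtain ⟨C₂, hC₂⟩ : ∃ C₂, ∀ z ∈ (fun p : ℝ × ℝ => ((p.1:ℂ) + (p.2:ℂ) * Complex.I)) ''
      (Set.Icc x y ×ˢ Set.Icc 0 (2*π)), ‖Φ z‖ ≤ C₂ := by
    apply IsCompact.exists_bound_of_continuousOn
    · exact ((isCompact_Icc).prod isCompact_Icc).image
        ((Complex.continuous_ofReal.comp continuous_fst).add
          ((Complex.continuous_ofReal.comp continuous_snd).mul continuous_const))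
    · apply hΦcont.mono
      rintro _ ⟨⟨s, θ⟩, ⟨hs, _⟩, rfl⟩
      constructor
      · simpa using lt_of_lt_of_le hx.1 hs.1
      · simpa using lt_of_le_of_lt hs.2 hy.2
  have hmbd : ∀ t ∈ Set.Icc x y, mfun Φ t ≤ 2*π*C₂ := by
    intro t ht
    have htS : ((t:ℝ):ℂ) ∈ S l₁ l₂ := ⟨by simpa using lt_of_lt_of_le hx.1 ht.1,
      by simpa using lt_of_le_of_lt ht.2 hy.2⟩
    have hle : mfun Φ t ≤ ∫ _ in (0:ℝ)..(2*π), C₂ := by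
      apply intervalIntegral.integral_mono_on Real.two_pi_pos.le
      · exact ((continuous_norm.comp (cont_slice hΦcont htS))).intervalIntegrable _ _
      · exact intervalIntegrable_const
      · intro θ hθ
        have := hC₂ _ ⟨(t, θ), ⟨ht, hθ⟩, rfl⟩
        simpa using this
    simpa using hle
  have hHB : BddAbove (norm ∘ H '' Complex.HadamardThreeLines.verticalClosedStrip 0 1) := by
    refine ⟨2*π*C₂, ?_⟩
    rintro _ ⟨w, hw, rfl⟩
    have haffw : aff w ∈ S l₁ l₂ := haffS w hw
    calc ‖H w‖ ≤ mfun Φ (aff w).re := hGbound _ haffw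
      _ ≤ 2*π*C₂ := by
          apply hmbd
          rw [haffre]
          constructor
          · nlinarith [hw.1, hw.2]
          · nlinarith [hw.1, hw.2]
  -- boundary bounds
  have ha0 : ∀ z ∈ Complex.re ⁻¹' {(0:ℝ)}, ‖H z‖ ≤ mfun Φ x := by
    intro z hz
    have hz0 : z.re = 0 := hz
    have haffz : aff z ∈ S l₁ l₂ := haffS z (by rw [hz0]; exact ⟨le_refl 0, zero_le_one⟩)
    have := hGbound _ haffz
    rwa [haffre, hz0, zero_mul, add_zero] at this
  have hb1 : ∀ z ∈ Complex.re ⁻¹' {(1:ℝ)}, ‖H z‖ ≤ mfun Φ y := by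
    intro z hz
    have hz1 : z.re = 1 := hz
    have haffz : aff z ∈ S l₁ l₂ := haffS z (by rw [hz1]; exact ⟨zero_le_one, le_refl 1⟩)
    have := hGbound _ haffz
    rwa [haffre, hz1, one_mul, show x + (y - x) = y by ring] at this
  -- apply Hadamard three lines
  have hbmem : ((b:ℝ):ℂ) ∈ Complex.HadamardThreeLines.verticalClosedStrip 0 1 := by
    constructor <;> simp <;> linarith
  have hHad := Complex.HadamardThreeLines.norm_le_interp_of_mem_verticalClosedStrip'
    (f := H) zero_lt_one hbmem hHd hHB ha0 hb1
  -- compute H b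
  have haffb : aff ((b:ℝ):ℂ) = ((t₀:ℝ):ℂ) := by
    have hab' : (a:ℂ) + (b:ℂ) = 1 := by exact_mod_cast hab
    simp only [haffdef, ht₀def]
    push_cast
    linear_combination (-(x:ℂ)) * hab'
  have hHb : H ((b:ℝ):ℂ) = ((mfun Φ t₀ : ℝ):ℂ) := by
    simp only [hHdef, haffb, hGdef]
    rw [show (∫ θ in (0:ℝ)..(2*π), u θ * Φ (((t₀:ℝ):ℂ) + (θ:ℂ) * Complex.I))
        = ∫ θ in (0:ℝ)..(2*π), ((‖c θ‖ : ℝ):ℂ) from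
      intervalIntegral.integral_congr (fun θ _ => huc θ)]
    rw [intervalIntegral.integral_ofReal]
    rfl
  have hHbnorm : ‖H ((b:ℝ):ℂ)‖ = mfun Φ t₀ := by
    rw [hHb, Complex.norm_real, Real.norm_eq_abs, _root_.abs_of_nonneg (mfun_nonneg Φ t₀)]
  rw [hHbnorm] at hHad
  have hre : ((b:ℝ):ℂ).re = b := Complex.ofReal_re b
  rw [hre] at hHad
  have h1b : 1 - b = a := by linarith
  simp only [sub_zero, div_one] at hHad
  rw [h1b] at hHad
  calc mfun Φ t₀ ≤ mfun Φ x ^ a * mfun Φ y ^ b := hHad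
    _ ≤ a * mfun Φ x + b * mfun Φ y :=
        Real.geom_mean_le_arith_mean2_weighted ha.le hb.le (mfun_nonneg Φ x)
          (mfun_nonneg Φ y) hab

lemma strip_convexOn {Φ : ℂ → ℂ} {l₁ l₂ : ℝ}
    (hΦ : DifferentiableOn ℂ Φ (S l₁ l₂))
    (hper : ∀ w, Φ (w + 2 * (π:ℂ) * Complex.I) = Φ w) :
    ConvexOn ℝ (Set.Ioo l₁ l₂) (mfun Φ) := by
  refine ⟨convex_Ioo _ _, fun x hx y hy a b ha hb hab => ?_⟩
  simp only [smul_eq_mul]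
  rcases ha.eq_or_lt with rfl | ha'
  · have hb1 : b = 1 := by linarith
    simp [hb1]
  rcases hb.eq_or_lt with rfl | hb'
  · have ha1 : a = 1 := by linarith
    simp [ha1]
  rcases lt_trichotomy x y with h | h | h
  · exact key hΦ hper hx hy h ha' hb' hab
  · subst h
    rw [← add_mul, hab, one_mul, ← add_mul, hab, one_mul]
  · have h2 := key hΦ hper hy hx h hb' ha' (by linarith)
    have e1 : a * x + b * y = b * y + a * x := by ring
    have e2 : a * mfun Φ x + b * mfun Φ y = b * mfun Φ y + a * mfun Φ x := by ring
    rw [e1, e2]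
    exact h2

end LengthConvexAux

/-- Convexity of the length functional along a holomorphic family of circles:
if g is holomorphic on the annulus r₁ < |z| < r₂, then the length of the image
of the circle of radius eᵗ is a convex function of t on (log r₁, log r₂). -/
theorem length_functional_convex
    (r₁ r₂ : ℝ) (hr₁ : 0 < r₁) (hr₂ : r₁ < r₂)
    (g : ℂ → ℂ)
    (hg : ∀ z : ℂ, r₁ < ‖z‖ → ‖z‖ < r₂ → DifferentiableAt ℂ g z) :
    ConvexOn ℝ (Set.Ioo (Real.log r₁) (Real.log r₂))
      (fun t : ℝ => ∫ θ in (0:ℝ)..(2 * π),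
        ‖deriv g ((Real.exp t : ℂ) * Complex.exp ((θ : ℂ) * Complex.I))‖
          * Real.exp t) := by
  open LengthConvexAux in
  set Φ : ℂ → ℂ := fun w => Complex.exp w * deriv g (Complex.exp w) with hΦdef
  -- the annulus
  set A : Set ℂ := {z : ℂ | r₁ < ‖z‖ ∧ ‖z‖ < r₂} with hAdef
  have hAopen : IsOpen A := by
    have h : A = norm ⁻¹' Set.Ioo r₁ r₂ := rfl
    rw [h]
    exact isOpen_Ioo.preimage continuous_norm
  have hgA : DifferentiableOn ℂ g A := fun z hz => (hg z hz.1 hz.2).differentiableWithinAt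
  have hdgA : AnalyticOnNhd ℂ (deriv g) A := (hgA.analyticOnNhd hAopen).deriv
  have hexp_mem : ∀ w : ℂ, w ∈ S (Real.log r₁) (Real.log r₂) → Complex.exp w ∈ A := by
    intro w hw
    rw [hAdef]
    constructor
    · rw [Complex.norm_exp]
      calc r₁ = Real.exp (Real.log r₁) := (Real.exp_log hr₁).symm
        _ < Real.exp w.re := Real.exp_lt_exp.mpr hw.1
    · rw [Complex.norm_exp]
      calc Real.exp w.re < Real.exp (Real.log r₂) := Real.exp_lt_exp.mpr hw.2
        _ = r₂ := Real.exp_log (hr₁.trans hr₂)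
  have h1 : DifferentiableOn ℂ Φ (S (Real.log r₁) (Real.log r₂)) := by
    intro w hw
    have hz := hexp_mem w hw
    have hd1 : DifferentiableAt ℂ (deriv g) (Complex.exp w) := (hdgA _ hz).differentiableAt
    exact ((Complex.differentiable_exp w).mul
      (hd1.comp w (Complex.differentiable_exp w))).differentiableWithinAt
  have h2 : ∀ w, Φ (w + 2 * (π:ℂ) * Complex.I) = Φ w := by
    intro w
    have he : Complex.exp (w + 2 * (π:ℂ) * Complex.I) = Complex.exp w := by
      rw [Complex.exp_add, Complex.exp_two_pi_mul_I, mul_one]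
    simp only [hΦdef, he]
  have hconv := LengthConvexAux.strip_convexOn h1 h2
  have hfun : (fun t : ℝ => ∫ θ in (0:ℝ)..(2 * π),
      ‖deriv g ((Real.exp t : ℂ) * Complex.exp ((θ : ℂ) * Complex.I))‖
        * Real.exp t) = LengthConvexAux.mfun Φ := by
    funext t
    apply intervalIntegral.integral_congr
    intro θ _
    have he : Complex.exp ((t:ℂ) + (θ:ℂ) * Complex.I)
        = (Real.exp t : ℂ) * Complex.exp ((θ:ℂ) * Complex.I) := by
      rw [Complex.exp_add, Complex.ofReal_exp]
    simp only [hΦdef, he]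
    have h3 : ‖(Real.exp t : ℂ) * Complex.exp ((θ:ℂ) * Complex.I)‖ = Real.exp t := by
      rw [norm_mul, Complex.norm_real, Real.norm_eq_abs, Complex.norm_exp, abs_of_nonneg (Real.exp_pos t).le]
      simp
    rw [norm_mul, h3, mul_comm]
  rw [hfun]
  exact hconv
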